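/- Let W be a vector space and suppose A_j(x) ∈ Hom(W,W((x⁻¹))) for 0 ≤ j ≤ s satisfy Σ_{j=0}^{s} q(x₁,x) A_j(x) (1/j!)(∂/∂x)^j x₁⁻¹δ(x/x₁) = 0, where q(x,z) is a polynomial such that q(x,1) and (x−1) are relatively prime in ℂ[x]. Then A_j(x) = 0 for all 0 ≤ j ≤ s. -/

import Mathlib

/-- The generalized binomial coefficient `C(a, k) = a(a−1)⋯(a−k+1)/k!` for `a ∈ ℤ`. -/
noncomputable def intBinom (a : ℤ) (k : ℕ) : ℂ :=
  (∏ j ∈ Finset.range k, ((a : ℂ) - (j : ℂ))) / (k.factorial : ℂ)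





lemma intBinom_zero (a : ℤ) : intBinom a 0 = 1 := by simp [intBinom]

lemma intBinom_pascal (a : ℤ) (k : ℕ) :
    intBinom (a + 1) (k + 1) = intBinom a (k + 1) + intBinom a k := by
  have hfac : (((k + 1).factorial : ℕ) : ℂ) = ((k : ℂ) + 1) * (k.factorial : ℂ) := by
    rw [Nat.factorial_succ]; push_cast; ring
  have h1 : ∏ j ∈ Finset.range (k + 1), (((a + 1 : ℤ) : ℂ) - (j : ℂ))
      = ((a : ℂ) + 1) * ∏ j ∈ Finset.range k, ((a : ℂ) - (j : ℂ)) := by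
    rw [Finset.prod_range_succ']
    rw [Finset.prod_congr rfl (fun i _ => by push_cast; ring :
      ∀ i ∈ Finset.range k, (((a + 1 : ℤ) : ℂ) - (((i + 1 : ℕ)) : ℂ)) = ((a : ℂ) - (i : ℂ)))]
    push_cast; ring
  have h2 : ∏ j ∈ Finset.range (k + 1), ((a : ℂ) - (j : ℂ))
      = (∏ j ∈ Finset.range k, ((a : ℂ) - (j : ℂ))) * ((a : ℂ) - (k : ℂ)) :=
    Finset.prod_range_succ _ _
  unfold intBinom
  rw [h1, h2, hfac]
  have hk : (k.factorial : ℂ) ≠ 0 := Nat.cast_ne_zero.mpr (Nat.factorial_ne_zero k)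
  have hk1 : ((k : ℂ) + 1) ≠ 0 := by
    have : (((k + 1 : ℕ)) : ℂ) ≠ 0 := Nat.cast_ne_zero.mpr (Nat.succ_ne_zero k)
    push_cast at this; exact this
  field_simp
  ring


open Polynomial

lemma polysum_finset {W : Type*} [AddCommGroup W] {ι : Type*} (s : Finset ι)
    (g : ι → Polynomial ℂ) (f : ℕ → ℂ → W)
    (h0 : ∀ k, f k 0 = 0) (hadd : ∀ k a b, f k (a + b) = f k a + f k b) :
    (∑ i ∈ s, g i).sum f = ∑ i ∈ s, (g i).sum f := by
  classical
  induction s using Finset.induction with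
  | empty => simp [Polynomial.sum_zero_index]
  | insert _ _ h ih =>
      rw [Finset.sum_insert h, Polynomial.sum_add_index _ _ _ h0 hadd, ih, Finset.sum_insert h]

lemma polysum_mul_X_pow {W : Type*} [AddCommGroup W] (p : Polynomial ℂ) (i : ℕ)
    (f : ℕ → ℂ → W) (h0 : ∀ k, f k 0 = 0) (hadd : ∀ k a b, f k (a + b) = f k a + f k b) :
    (p * Polynomial.X ^ i).sum f = p.sum fun k c => f (k + i) c := by
  induction p using Polynomial.induction_on' with
  | add p q hp hq =>
      rw [add_mul, Polynomial.sum_add_index _ _ _ h0 hadd, hp, hq,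
        Polynomial.sum_add_index _ _ _ (fun k => h0 _) (fun k a b => hadd _ _ _)]
  | monomial n a =>
      rw [Polynomial.X_pow_eq_monomial, Polynomial.monomial_mul_monomial, mul_one,
        Polynomial.sum_monomial_index _ _ (h0 _)]
      exact (Polynomial.sum_monomial_index a (fun k c => f (k + i) c) (h0 _)).symm

lemma conv {W : Type*} [AddCommGroup W] [Module ℂ W] (q : Polynomial (Polynomial ℂ))
    (B : ℤ → W) (m : ℤ) :
    (∑ i ∈ q.support, ∑ k ∈ (q.coeff i).support,
      ((q.coeff i).coeff k) • B ((k : ℤ) + (i : ℤ) + m))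
    = ∑ t ∈ (q.eval Polynomial.X).support,
        ((q.eval Polynomial.X).coeff t) • B ((t : ℤ) + m) := by
  classical
  set f : ℕ → ℂ → W := fun t c => c • B ((t : ℤ) + m) with hf
  have h0 : ∀ k, f k 0 = 0 := fun k => zero_smul ℂ _
  have hadd : ∀ k a b, f k (a + b) = f k a + f k b := fun k a b => add_smul a b _
  have step : ∀ i ∈ q.support,
      (∑ k ∈ (q.coeff i).support, ((q.coeff i).coeff k) • B ((k : ℤ) + (i : ℤ) + m))
      = (q.coeff i * Polynomial.X ^ i).sum f := by
    intro i _
    rw [polysum_mul_X_pow _ _ f h0 hadd, Polynomial.sum_def]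
    refine Finset.sum_congr rfl fun k _ => ?_
    simp only [hf]
    norm_cast
  rw [Finset.sum_congr rfl step, ← polysum_finset _ _ f h0 hadd]
  have hev : q.eval Polynomial.X = ∑ i ∈ q.support, q.coeff i * Polynomial.X ^ i := by
    rw [Polynomial.eval_eq_sum, Polynomial.sum_def]
  rw [← hev, Polynomial.sum_def]

lemma base_lemma {W : Type*} [AddCommGroup W] [Module ℂ W] (P : Polynomial ℂ) (hP : P ≠ 0)
    (B : ℤ → W) (N : ℤ) (hN : ∀ n ≤ N, B n = 0)
    (hid : ∀ m : ℤ, ∑ t ∈ P.support, P.coeff t • B ((t : ℤ) + m) = 0) :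
    ∀ n, B n = 0 := by
  classical
  set d := P.natDegree with hdd
  have hd : d ∈ P.support := Polynomial.natDegree_mem_support_of_nonzero hP
  have hld : P.coeff d ≠ 0 := by
    rw [hdd, ← Polynomial.leadingCoeff]
    exact Polynomial.leadingCoeff_ne_zero.mpr hP
  have key : ∀ M : ℕ, ∀ n, n ≤ N + M → B n = 0 := by
    intro M
    induction M with
    | zero => intro n hn; exact hN n (by simpa using hn)
    | succ M ih =>
      intro n hn
      rcases le_or_gt n (N + M) with h | h
      · exact ih n (by exact_mod_cast h)
      have hm := hid (n - d)
      rw [← Finset.add_sum_erase _ _ hd] at hm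
      have hz : ∑ t ∈ P.support.erase d, P.coeff t • B ((t : ℤ) + (n - d)) = 0 := by
        refine Finset.sum_eq_zero fun t ht => ?_
        have h1 : t ≠ d := (Finset.mem_erase.mp ht).1
        have h2 : t ≤ d := Polynomial.le_natDegree_of_mem_supp _ (Finset.mem_erase.mp ht).2
        have h3 : (t : ℤ) + (n - d) ≤ N + M := by
          have : (t : ℤ) < d := by exact_mod_cast lt_of_le_of_ne h2 h1
          push_cast at hn ⊢
          omega
        rw [ih _ h3, smul_zero]
      rw [hz, add_zero] at hm
      have hb : B ((d : ℤ) + (n - d)) = 0 := by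
        rcases smul_eq_zero.mp hm with h' | h'
        · exact absurd h' hld
        · exact h'
      simpa using hb
  intro n
  exact key (n - N).toNat n (by omega)

lemma Pne (q : Polynomial (Polynomial ℂ))
    (hcop : IsCoprime (q.map (Polynomial.evalRingHom (1 : ℂ)))
      (Polynomial.X - Polynomial.C 1)) :
    q.eval Polynomial.X ≠ 0 := by
  intro h
  have hroot : (Polynomial.X - Polynomial.C (Polynomial.X : Polynomial ℂ)) ∣ q :=
    Polynomial.dvd_iff_isRoot.mpr h
  have hdvd : (Polynomial.X - Polynomial.C (1 : ℂ)) ∣ q.map (Polynomial.evalRingHom (1 : ℂ)) := by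
    have h2 := map_dvd (Polynomial.mapRingHom (Polynomial.evalRingHom (1 : ℂ))) hroot
    simpa using h2
  have hu := hcop.isUnit_of_dvd' hdvd dvd_rfl
  rw [Polynomial.isUnit_iff_degree_eq_zero] at hu
  rw [Polynomial.degree_X_sub_C] at hu
  exact one_ne_zero hu

lemma finish_j0 {W : Type*} [AddCommGroup W] [Module ℂ W] (q : Polynomial (Polynomial ℂ))
    (hP : q.eval Polynomial.X ≠ 0) (A0 : ℤ → Module.End ℂ W)
    (hA0 : ∀ w : W, ∃ N : ℤ, ∀ n : ℤ, n ≤ N → A0 n w = 0)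
    (hz0 : ∀ (m : ℤ) (w : W),
      ∑ i ∈ q.support, ∑ k ∈ (q.coeff i).support,
        ((q.coeff i).coeff k) • A0 ((k : ℤ) + (i : ℤ) + m) w = 0) :
    ∀ (n : ℤ) (w : W), A0 n w = 0 := by
  intro n w
  obtain ⟨N, hN⟩ := hA0 w
  refine base_lemma _ hP (fun n => A0 n w) N hN (fun m => ?_) n
  rw [← conv q (fun n => A0 n w) m]
  simpa using hz0 m w

lemma key_lemma (W : Type) [AddCommGroup W] [Module ℂ W]
    (q : Polynomial (Polynomial ℂ)) (hP : q.eval Polynomial.X ≠ 0) :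
    ∀ (s : ℕ) (A : ℕ → ℤ → Module.End ℂ W),
    (∀ j : ℕ, j ≤ s → ∀ w : W, ∃ N : ℤ, ∀ n : ℤ, n ≤ N → A j n w = 0) →
    (∀ (a b : ℤ) (w : W),
      (∑ j ∈ Finset.range (s + 1), ∑ i ∈ q.support, ∑ k ∈ (q.coeff i).support,
        (((q.coeff i).coeff k) * intBinom ((i : ℤ) - a - 1) j) •
          A j ((k : ℤ) + (i : ℤ) - a - (j : ℤ) - b - 2) w) = 0) →
    ∀ j : ℕ, j ≤ s → ∀ (n : ℤ) (w : W), A j n w = 0 := by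
  intro s
  induction s with
  | zero =>
    intro A hA hz j hj n w
    interval_cases j
    refine finish_j0 q hP (A 0) (hA 0 le_rfl) (fun m w => ?_) n w
    have h1 := hz 0 (-m - 2) w
    rw [Finset.sum_range_one] at h1
    refine Eq.trans (Finset.sum_congr rfl fun i _ => Finset.sum_congr rfl fun k _ => ?_) h1
    have harg : ((k : ℤ) + (i : ℤ) + m)
        = ((k : ℤ) + (i : ℤ) - 0 - (((0 : ℕ) : ℤ)) - (-m - 2) - 2) := by push_cast; ring
    rw [intBinom_zero, mul_one, harg]
  | succ s ih =>
    intro A hA hz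
    have hder : ∀ (a b : ℤ) (w : W),
        (∑ j ∈ Finset.range (s + 1), ∑ i ∈ q.support, ∑ k ∈ (q.coeff i).support,
          (((q.coeff i).coeff k) * intBinom ((i : ℤ) - a - 1) j) •
            A (j + 1) ((k : ℤ) + (i : ℤ) - a - (j : ℤ) - b - 2) w) = 0 := by
      intro a b w
      have h2 := hz (a - 1) b w
      have h3 := hz a (b - 1) w
      have h23 := sub_eq_zero_of_eq (h2.trans h3.symm)
      have h4 : (∑ j ∈ Finset.range (s + 1 + 1), ∑ i ∈ q.support, ∑ k ∈ (q.coeff i).support,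
          (((q.coeff i).coeff k) *
            (intBinom ((i : ℤ) - a) j - intBinom ((i : ℤ) - a - 1) j)) •
            A j ((k : ℤ) + (i : ℤ) - a - (j : ℤ) - b - 1) w) = 0 := by
        refine Eq.trans ?_ h23
        rw [← Finset.sum_sub_distrib]
        refine Finset.sum_congr rfl fun j _ => ?_
        rw [← Finset.sum_sub_distrib]
        refine Finset.sum_congr rfl fun i _ => ?_
        rw [← Finset.sum_sub_distrib]
        refine Finset.sum_congr rfl fun k _ => ?_
        rw [show (i : ℤ) - (a - 1) - 1 = (i : ℤ) - a by ring,
            show (k : ℤ) + (i : ℤ) - (a - 1) - (j : ℤ) - b - 2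
              = (k : ℤ) + (i : ℤ) - a - (j : ℤ) - b - 1 by ring,
            show (k : ℤ) + (i : ℤ) - a - (j : ℤ) - (b - 1) - 2
              = (k : ℤ) + (i : ℤ) - a - (j : ℤ) - b - 1 by ring,
            ← sub_smul, ← mul_sub]
      rw [Finset.sum_range_succ'] at h4
      have h5 : (∑ i ∈ q.support, ∑ k ∈ (q.coeff i).support,
          (((q.coeff i).coeff k) *
            (intBinom ((i : ℤ) - a) 0 - intBinom ((i : ℤ) - a - 1) 0)) •
            A 0 ((k : ℤ) + (i : ℤ) - a - (((0 : ℕ)) : ℤ) - b - 1) w) = 0 := by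
        refine Finset.sum_eq_zero fun i _ => Finset.sum_eq_zero fun k _ => ?_
        rw [intBinom_zero, intBinom_zero, sub_self, mul_zero, zero_smul]
      rw [h5, add_zero] at h4
      refine Eq.trans ?_ h4
      refine Finset.sum_congr rfl fun j _ => Finset.sum_congr rfl fun i _ =>
        Finset.sum_congr rfl fun k _ => ?_
      have hpas : intBinom ((i : ℤ) - a) (j + 1) - intBinom ((i : ℤ) - a - 1) (j + 1)
          = intBinom ((i : ℤ) - a - 1) j := by
        have hp := intBinom_pascal ((i : ℤ) - a - 1) j
        rw [show (i : ℤ) - a - 1 + 1 = (i : ℤ) - a by ring] at hp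
        rw [hp]; ring
      rw [hpas, show (k : ℤ) + (i : ℤ) - a - (((j + 1 : ℕ)) : ℤ) - b - 1
          = (k : ℤ) + (i : ℤ) - a - (j : ℤ) - b - 2 by push_cast; ring]
    have h1 : ∀ j : ℕ, j ≤ s → ∀ (n : ℤ) (w : W), A (j + 1) n w = 0 :=
      ih (fun j => A (j + 1)) (fun j hj w => hA (j + 1) (by omega) w) hder
    intro j hj n w
    rcases Nat.eq_zero_or_eq_succ_pred j with h0 | hsucc
    · subst h0
      refine finish_j0 q hP (A 0) (hA 0 (by omega)) (fun m w => ?_) n w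
      have h2 := hz 0 (-m - 2) w
      rw [Finset.sum_range_succ'] at h2
      have h3 : (∑ j ∈ Finset.range (s + 1), ∑ i ∈ q.support, ∑ k ∈ (q.coeff i).support,
          (((q.coeff i).coeff k) * intBinom ((i : ℤ) - 0 - 1) (j + 1)) •
            A (j + 1) ((k : ℤ) + (i : ℤ) - 0 - (((j + 1 : ℕ)) : ℤ) - (-m - 2) - 2) w) = 0 := by
        refine Finset.sum_eq_zero fun j hj' => Finset.sum_eq_zero fun i _ =>
          Finset.sum_eq_zero fun k _ => ?_
        rw [h1 j (Nat.lt_succ_iff.mp (Finset.mem_range.mp hj')) _ w, smul_zero]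
      rw [h3, zero_add] at h2
      refine Eq.trans (Finset.sum_congr rfl fun i _ => Finset.sum_congr rfl fun k _ => ?_) h2
      have harg : ((k : ℤ) + (i : ℤ) + m)
          = ((k : ℤ) + (i : ℤ) - 0 - (((0 : ℕ)) : ℤ) - (-m - 2) - 2) := by push_cast; ring
      rw [intBinom_zero, mul_one, harg]
    · obtain ⟨j', rfl⟩ : ∃ j', j = j' + 1 := ⟨j.pred, hsucc⟩
      exact h1 j' (by omega) n w

/-- Suppose `A_j(x) ∈ Hom(W,W((x⁻¹)))` for `0 ≤ j ≤ s` satisfy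
`Σ_{j=0}^{s} q(x₁,x) A_j(x) (1/j!)(∂/∂x)^j x₁⁻¹δ(x/x₁) = 0`, where `q(x₁,x)` is a
polynomial (outer variable `x₁`, inner variable `x`) such that `q(x₁,1)` and `x₁ − 1`
are relatively prime.  (Coefficientwise, the hypothesis says that at each `x₁^a x^b`:
`Σ_j Σ_{(i,k) ∈ supp q} q_{ik} C(i−a−1, j) A_j(k+i−a−j−b−2) w = 0`, coming from
`x₁⁻¹δ(x/x₁) = Σ_n xⁿ x₁^{−n−1}` and `(1/j!)(∂/∂x)^j xⁿ = C(n,j)x^{n−j}`.)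
Then `A_j = 0` for all `0 ≤ j ≤ s`. -/
theorem stmt_18 (W : Type) [AddCommGroup W] [Module ℂ W] (s : ℕ)
    (A : ℕ → ℤ → Module.End ℂ W)
    (hA : ∀ j : ℕ, j ≤ s → ∀ w : W, ∃ N : ℤ, ∀ n : ℤ, n ≤ N → A j n w = 0)
    (q : Polynomial (Polynomial ℂ)) (hq0 : q ≠ 0)
    (hcop : IsCoprime (q.map (Polynomial.evalRingHom (1 : ℂ)))
      (Polynomial.X - Polynomial.C 1))
    (hzero : ∀ (a b : ℤ) (w : W),
      (∑ j ∈ Finset.range (s + 1), ∑ i ∈ q.support, ∑ k ∈ (q.coeff i).support,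
        (((q.coeff i).coeff k) * intBinom ((i : ℤ) - a - 1) j) •
          A j ((k : ℤ) + (i : ℤ) - a - (j : ℤ) - b - 2) w) = 0) :
    ∀ j : ℕ, j ≤ s → ∀ (n : ℤ) (w : W), A j n w = 0 :=
  key_lemma W q (Pne q hcop) s A hA hzero
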